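/- Let (R, R⁺) be an analytic perfectoid pair of characteristic p with ideal of definition (x_0, ..., x_m) ⊂ R⁺. Then the Gauss norm |∑_{n≥0} p^n [x̄_n]| = sup_n |x̄_n| on W(R⁺) induces the ([x_0], ..., [x_m])-adic topology on W(R⁺); and the weighted Gauss norm |∑ p^n [x̄_n]|_ρ = sup_n ρ^{-n}|x̄_n| (for ρ ∈ (0,1)) induces the (p, [x_0], ..., [x_m])-adic topology. -/

import Mathlib

open WittVector MvPolynomial

namespace Stmt16Aux

variable {p : ℕ} [hp : Fact p.Prime]

section Universal

variable {A : Type*} [CommRing A] {B : Type*} [CommRing B]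

theorem ghost_mk (f : ℕ → A) (n : ℕ) :
    ghostComponent n (WittVector.mk p f) =
      ∑ i ∈ Finset.range (n + 1), (p : A) ^ i * f i ^ p ^ (n - i) := by
  rw [ghostComponent_apply, aeval_wittPolynomial]
  simp [WittVector.coeff_mk]

theorem map_mk (f : A →+* B) (g : ℕ → A) :
    WittVector.map f (WittVector.mk p g) = WittVector.mk p (fun n => f (g n)) := by
  ext n
  simp [WittVector.map_coeff, WittVector.coeff_mk]

theorem mk_self (w : WittVector p A) : WittVector.mk p w.coeff = w := by
  ext n; simp [WittVector.coeff_mk]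

-- injectivity of ghost map over `MvPolynomial V ℚ`
theorem ghost_inj {V : Type*} {x y : WittVector p (MvPolynomial V ℚ)}
    (h : ∀ n, ghostComponent n x = ghostComponent n y) : x = y := by
  have := (WittVector.ghostMap.bijective_of_invertible p (MvPolynomial V ℚ)).1
  apply this
  funext n
  rw [ghostMap_apply, ghostMap_apply, h]

/-- The key universal identity: multiplication by a Teichmüller lift acts
coordinatewise. -/
theorem teichmuller_mul_coeff (c : A) (w : WittVector p A) (n : ℕ) :
    (WittVector.teichmuller p c * w).coeff n = c ^ p ^ n * w.coeff n := by
  -- universal version over ℤ-polynomials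
  have key : (WittVector.teichmuller p (X none) *
        WittVector.mk p (fun i => X (some i)) : WittVector p (MvPolynomial (Option ℕ) ℤ)) =
      WittVector.mk p (fun i => (X none : MvPolynomial (Option ℕ) ℤ) ^ p ^ i * X (some i)) := by
    apply WittVector.map_injective (MvPolynomial.map (Int.castRingHom ℚ))
      (MvPolynomial.map_injective _ Int.cast_injective)
    rw [RingHom.map_mul, WittVector.map_teichmuller, map_mk, map_mk]
    apply ghost_inj
    intro n
    rw [RingHom.map_mul, ghostComponent_teichmuller, ghost_mk, ghost_mk, Finset.mul_sum]
    refine Finset.sum_congr rfl ?_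
    intro i hi
    rw [Finset.mem_range, Nat.lt_succ_iff] at hi
    simp only [map_mul, map_pow, MvPolynomial.map_X]
    rw [mul_pow, ← pow_mul, ← pow_add, Nat.add_sub_cancel' hi]
    ring
  -- transfer to `A`
  set e : MvPolynomial (Option ℕ) ℤ →+* A :=
    MvPolynomial.eval₂Hom (Int.castRingHom A) (fun v : Option ℕ => v.elim c w.coeff) with he
  have := congrArg (WittVector.map e) key
  rw [RingHom.map_mul, WittVector.map_teichmuller, map_mk, map_mk] at this
  have h1 : e (X none) = c := by simp [he]
  rw [h1] at this
  have h2 : WittVector.mk p (fun n => e (X (some n))) = w := by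
    ext n; simp [he, WittVector.coeff_mk]
  rw [h2] at this
  have := congrArg (fun z : WittVector p A => z.coeff n) this
  simpa [WittVector.coeff_mk, he] using this

/-- Adding Witt vectors with disjoint coordinate support concatenates coordinates. -/
theorem disj_add_coeff (N : ℕ) (a b : WittVector p A)
    (ha : ∀ k, N ≤ k → a.coeff k = 0) (hb : ∀ k, k < N → b.coeff k = 0) (k : ℕ) :
    (a + b).coeff k = if k < N then a.coeff k else b.coeff k := by
  have key : ((WittVector.mk p (fun i => if i < N then X (Sum.inl i) else 0)) +
        (WittVector.mk p (fun i => if i < N then 0 else X (Sum.inr i)))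
          : WittVector p (MvPolynomial (ℕ ⊕ ℕ) ℤ)) =
      WittVector.mk p (fun i => if i < N then X (Sum.inl i) else X (Sum.inr i)) := by
    apply WittVector.map_injective (MvPolynomial.map (Int.castRingHom ℚ))
      (MvPolynomial.map_injective _ Int.cast_injective)
    rw [RingHom.map_add, map_mk, map_mk, map_mk]
    apply ghost_inj
    intro n
    rw [RingHom.map_add, ghost_mk, ghost_mk, ghost_mk, ← Finset.sum_add_distrib]
    refine Finset.sum_congr rfl ?_
    intro i _
    have hppow : p ^ (n - i) ≠ 0 := pow_ne_zero _ hp.out.ne_zero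
    by_cases h : i < N <;> simp [h, apply_ite (MvPolynomial.map (Int.castRingHom ℚ)),
      zero_pow hppow] <;> ring
  set e : MvPolynomial (ℕ ⊕ ℕ) ℤ →+* A :=
    MvPolynomial.eval₂Hom (Int.castRingHom A) (Sum.elim a.coeff b.coeff) with he
  have := congrArg (WittVector.map e) key
  rw [RingHom.map_add, map_mk, map_mk, map_mk] at this
  have hA : WittVector.mk p (fun i => e (if i < N then X (Sum.inl i) else 0)) = a := by
    ext i
    rw [WittVector.coeff_mk]
    by_cases h : i < N <;> simp [he, h]
    exact (ha i (le_of_not_gt h)).symm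
  have hB : WittVector.mk p (fun i => e (if i < N then 0 else X (Sum.inr i))) = b := by
    ext i
    rw [WittVector.coeff_mk]
    by_cases h : i < N <;> simp [he, h]
    exact (hb i h).symm
  rw [hA, hB] at this
  have := congrArg (fun z : WittVector p A => z.coeff k) this
  simp only [WittVector.coeff_mk] at this
  rw [this]
  by_cases h : k < N <;> simp [he, h]

end Universal

section Rees

variable {S : Type*} [CommRing S]

/-- The Rees-style closure lemma: if a family of additive subgroups `κ` is
submultiplicative (with `κ 0` everything), then the class of Witt vectors whose
`n`-th coordinate lies in `κ (p ^ n)` is closed under subtraction, addition, and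
multiplication by arbitrary Witt vectors. -/
theorem rees_closure (κ : ℕ → AddSubgroup S) (htop : ∀ s : S, s ∈ κ 0)
    (hmul : ∀ u v a b, a ∈ κ u → b ∈ κ v → a * b ∈ κ (u + v)) :
    (∀ (w v : WittVector p S), (∀ n, w.coeff n ∈ κ (p ^ n)) → (∀ n, v.coeff n ∈ κ (p ^ n)) →
        ∀ n, (w - v).coeff n ∈ κ (p ^ n)) ∧
      (∀ (w v : WittVector p S), (∀ n, w.coeff n ∈ κ (p ^ n)) →
        ∀ n, (w * v).coeff n ∈ κ (p ^ n)) ∧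
      (∀ (w v : WittVector p S), (∀ n, w.coeff n ∈ κ (p ^ n)) → (∀ n, v.coeff n ∈ κ (p ^ n)) →
        ∀ n, (w + v).coeff n ∈ κ (p ^ n)) := by
  classical
  -- the Rees subring of `S[X]`
  let T : Subring (Polynomial S) :=
    { carrier := {f | ∀ k, f.coeff k ∈ κ k}
      zero_mem' := by intro k; simp only [Polynomial.coeff_zero]; exact (κ k).zero_mem
      one_mem' := by
        intro k
        rw [Polynomial.coeff_one]
        split_ifs with h
        · subst h; exact htop 1
        · exact (κ k).zero_mem
      add_mem' := by
        intro f g hf hg k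
        rw [Polynomial.coeff_add]
        exact (κ k).add_mem (hf k) (hg k)
      neg_mem' := by
        intro f hf k
        rw [Polynomial.coeff_neg]
        exact (κ k).neg_mem (hf k)
      mul_mem' := by
        intro f g hf hg k
        rw [Polynomial.coeff_mul]
        apply AddSubgroup.sum_mem
        intro c hc
        have := Finset.HasAntidiagonal.mem_antidiagonal.1 hc
        rw [← this]
        exact hmul _ _ _ _ (hf c.1) (hg c.2) }
  -- coefficient of the hat-transform
  have hatcoeff : ∀ (w : WittVector p S) (n : ℕ),
      (WittVector.teichmuller p (Polynomial.X : Polynomial S) *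
        WittVector.map (Polynomial.C) w).coeff n =
      Polynomial.C (w.coeff n) * Polynomial.X ^ (p ^ n) := by
    intro w n
    rw [teichmuller_mul_coeff, WittVector.map_coeff, mul_comm]
  -- membership of the hat-transform in `T` (coordinatewise)
  have hatmem : ∀ (w : WittVector p S), (∀ n, w.coeff n ∈ κ (p ^ n)) →
      ∀ n, (WittVector.teichmuller p (Polynomial.X : Polynomial S) *
        WittVector.map (Polynomial.C) w).coeff n ∈ T := by
    intro w hw n
    rw [hatcoeff, Polynomial.C_mul_X_pow_eq_monomial]
    intro k
    rw [Polynomial.coeff_monomial]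
    split_ifs with h
    · subst h; exact hw n
    · exact (κ k).zero_mem
  have cmem : ∀ (v : WittVector p S) (n : ℕ), (WittVector.map (Polynomial.C) v).coeff n ∈ T := by
    intro v n
    rw [WittVector.map_coeff]
    intro k
    rw [Polynomial.coeff_C]
    split_ifs with h
    · subst h; exact htop _
    · exact (κ k).zero_mem
  -- closure of coordinatewise `T`-membership under ring operations
  have lift : ∀ (u : WittVector p (Polynomial S)) (hu : ∀ n, u.coeff n ∈ T),
      WittVector.map T.subtype (WittVector.mk p (fun n => (⟨u.coeff n, hu n⟩ : T))) = u := by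
    intro u hu
    ext n
    simp [WittVector.map_coeff, WittVector.coeff_mk]
  -- extraction of coefficients
  have extract : ∀ (z : WittVector p S) (n : ℕ),
      ((WittVector.teichmuller p (Polynomial.X : Polynomial S) *
        WittVector.map (Polynomial.C) z).coeff n ∈ T) → z.coeff n ∈ κ (p ^ n) := by
    intro z n hz
    rw [hatcoeff, Polynomial.C_mul_X_pow_eq_monomial] at hz
    have := hz (p ^ n)
    rwa [Polynomial.coeff_monomial, if_pos rfl] at this
  refine ⟨?_, ?_, ?_⟩
  · intro w v hw hv n
    apply extract
    have : WittVector.teichmuller p (Polynomial.X : Polynomial S) *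
        WittVector.map (Polynomial.C) (w - v) =
        WittVector.map T.subtype
          ((WittVector.mk p (fun n => (⟨_, hatmem w hw n⟩ : T))) -
           (WittVector.mk p (fun n => (⟨_, hatmem v hv n⟩ : T)))) := by
      rw [map_sub (WittVector.map T.subtype), lift, lift,
        map_sub (WittVector.map (Polynomial.C : S →+* Polynomial S)), mul_sub]
    rw [this, WittVector.map_coeff]
    exact SetLike.coe_mem _
  · intro w v hw n
    apply extract
    have : WittVector.teichmuller p (Polynomial.X : Polynomial S) *
        WittVector.map (Polynomial.C) (w * v) =
        WittVector.map T.subtype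
          ((WittVector.mk p (fun n => (⟨_, hatmem w hw n⟩ : T))) *
           (WittVector.mk p (fun n => (⟨_, cmem v n⟩ : T)))) := by
      rw [map_mul (WittVector.map T.subtype), lift, lift,
        map_mul (WittVector.map (Polynomial.C : S →+* Polynomial S)), mul_assoc]
    rw [this, WittVector.map_coeff]
    exact SetLike.coe_mem _
  · intro w v hw hv n
    apply extract
    have : WittVector.teichmuller p (Polynomial.X : Polynomial S) *
        WittVector.map (Polynomial.C) (w + v) =
        WittVector.map T.subtype
          ((WittVector.mk p (fun n => (⟨_, hatmem w hw n⟩ : T))) +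
           (WittVector.mk p (fun n => (⟨_, hatmem v hv n⟩ : T)))) := by
      rw [map_add (WittVector.map T.subtype), lift, lift,
        map_add (WittVector.map (Polynomial.C : S →+* Polynomial S)), mul_add]
    rw [this, WittVector.map_coeff]
    exact SetLike.coe_mem _

end Rees

section CharP

variable {S : Type*} [CommRing S] [CharP S p]

theorem p_mul_coeff_zero (y : WittVector p S) : ((p : WittVector p S) * y).coeff 0 = 0 := by
  rw [mul_comm]; exact mul_charP_coeff_zero y

theorem p_mul_coeff_succ (y : WittVector p S) (i : ℕ) :
    ((p : WittVector p S) * y).coeff (i + 1) = y.coeff i ^ p := by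
  rw [mul_comm]; exact mul_charP_coeff_succ y i

theorem p_pow_mul_coeff (j : ℕ) (y : WittVector p S) (n : ℕ) :
    ((p : WittVector p S) ^ j * y).coeff n =
      if n < j then 0 else y.coeff (n - j) ^ p ^ j := by
  induction j generalizing y n with
  | zero => simp
  | succ j ih =>
    have : (p : WittVector p S) ^ (j + 1) * y = (p : WittVector p S) ^ j *
        ((p : WittVector p S) * y) := by ring
    rw [this, ih]
    by_cases h : n < j
    · rw [if_pos h, if_pos (by omega)]
    · rw [if_neg h]
      by_cases h2 : n < j + 1
      · -- n = j, so n - j = 0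
        have hnj : n - j = 0 := by omega
        rw [if_pos h2, hnj, p_mul_coeff_zero, zero_pow (pow_ne_zero _ hp.out.ne_zero)]
      · have hnj : n - j = (n - (j + 1)) + 1 := by omega
        rw [if_neg h2, hnj, p_mul_coeff_succ, ← pow_mul, ← pow_succ']

theorem p_pow_teichmuller_coeff (n : ℕ) (t : S) (k : ℕ) :
    ((p : WittVector p S) ^ n * WittVector.teichmuller p t).coeff k =
      if k = n then t ^ p ^ n else 0 := by
  rw [p_pow_mul_coeff]
  by_cases h : k < n
  · rw [if_pos h, if_neg (by omega)]
  · by_cases h2 : k = n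
    · subst h2
      simp [WittVector.teichmuller_coeff_zero]
    · rw [if_neg h, if_neg h2]
      have : k - n = (k - n - 1) + 1 := by omega
      rw [this, WittVector.teichmuller_coeff_pos p t _ (Nat.succ_pos _),
        zero_pow (pow_ne_zero _ hp.out.ne_zero)]

theorem teichsum_coeff (N : ℕ) (t : ℕ → S) (k : ℕ) :
    ((∑ n ∈ Finset.range N, (p : WittVector p S) ^ n * WittVector.teichmuller p (t n)).coeff k) =
      if k < N then t k ^ p ^ k else 0 := by
  induction N generalizing k with
  | zero => simp
  | succ N ih =>
    rw [Finset.sum_range_succ]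
    rw [disj_add_coeff N _ _ (fun j hj => by rw [ih, if_neg (by omega)])
      (fun j hj => by rw [p_pow_teichmuller_coeff, if_neg (by omega)])]
    by_cases h : k < N
    · rw [if_pos h, ih, if_pos h, if_pos (by omega)]
    · rw [if_neg h, p_pow_teichmuller_coeff]
      by_cases h2 : k = N
      · subst h2; rw [if_pos rfl, if_pos (by omega)]
      · rw [if_neg h2, if_neg (by omega)]

end CharP

section Perfect

variable {S : Type*} [CommRing S] [CharP S p] [PerfectRing S p]

variable (p) in
/-- Inverse of the Frobenius. -/
noncomputable def frobInv (S : Type*) [CommRing S] [CharP S p] [PerfectRing S p] : S → S :=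
  fun s => (frobeniusEquiv S p).symm s

theorem frobInv_pow_p (s : S) : frobInv p S s ^ p = s := by
  have := frobenius_apply_frobeniusEquiv_symm S p s
  rwa [frobenius_def] at this

theorem frobInv_p_pow (s : S) : frobInv p S (s ^ p) = s := by
  have := frobeniusEquiv_symm_apply_frobenius S p s
  rwa [frobenius_def] at this

theorem frobInv_mul (a b : S) : frobInv p S (a * b) = frobInv p S a * frobInv p S b :=
  map_mul (frobeniusEquiv S p).symm a b

theorem frobInv_add (a b : S) : frobInv p S (a + b) = frobInv p S a + frobInv p S b :=
  map_add (frobeniusEquiv S p).symm a b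

theorem frobInv_zero : frobInv p S 0 = 0 := map_zero (frobeniusEquiv S p).symm

theorem frobInv_one : frobInv p S 1 = 1 := map_one (frobeniusEquiv S p).symm

theorem frobInv_pow (a : S) (n : ℕ) : frobInv p S (a ^ n) = frobInv p S a ^ n :=
  map_pow (frobeniusEquiv S p).symm a n

theorem frobInv_prod {ι : Type*} (s : Finset ι) (f : ι → S) :
    frobInv p S (∏ i ∈ s, f i) = ∏ i ∈ s, frobInv p S (f i) :=
  map_prod (frobeniusEquiv S p).symm f s

theorem frobInv_iterate_pow' (k : ℕ) (z : S) (n : ℕ) :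
    ((frobInv p S)^[k] z) ^ n = (frobInv p S)^[k] (z ^ n) := by
  induction k generalizing z with
  | zero => simp
  | succ k ih =>
    rw [Function.iterate_succ_apply, Function.iterate_succ_apply, ih, ← frobInv_pow]

theorem frobInv_iterate_pow_pow (k : ℕ) (s : S) : ((frobInv p S)^[k] s) ^ p ^ k = s := by
  induction k generalizing s with
  | zero => simp
  | succ k ih =>
    rw [Function.iterate_succ_apply, pow_succ, pow_mul, ih (frobInv p S s), frobInv_pow_p]

variable {m : ℕ}

variable (p) in
/-- The "fractional monomial" ideal filtration. -/
noncomputable def Ih (x : Fin (m + 1) → S) (d : ℕ) : Ideal S :=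
  Ideal.span {g | ∃ (k : ℕ) (a : Fin (m + 1) → ℕ),
    d * p ^ k ≤ ∑ i, a i ∧ g = ∏ i, ((frobInv p S)^[k] (x i)) ^ a i}

theorem gen_mem_Ih {x : Fin (m + 1) → S} {d : ℕ} {k : ℕ} {a : Fin (m + 1) → ℕ}
    (h : d * p ^ k ≤ ∑ i, a i) : (∏ i, ((frobInv p S)^[k] (x i)) ^ a i) ∈ Ih p x d :=
  Ideal.subset_span ⟨k, a, h, rfl⟩

theorem Ih_zero (x : Fin (m + 1) → S) : Ih p x 0 = ⊤ := by
  rw [Ideal.eq_top_iff_one]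
  have : (1 : S) = ∏ i, ((frobInv p S)^[0] (x i)) ^ (fun _ : Fin (m+1) => 0) i := by simp
  rw [this]
  exact gen_mem_Ih (by simp)

theorem Ih_anti (x : Fin (m + 1) → S) {d e : ℕ} (h : d ≤ e) : Ih p x e ≤ Ih p x d := by
  apply Ideal.span_le.2
  rintro g ⟨k, a, hk, rfl⟩
  exact gen_mem_Ih (le_trans (Nat.mul_le_mul_right _ h) hk)

/-- raising the denominator level of a generator -/
theorem gen_level_up {x : Fin (m + 1) → S} (k K : ℕ) (hkK : k ≤ K) (a : Fin (m + 1) → ℕ) :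
    (∏ i, ((frobInv p S)^[k] (x i)) ^ a i) =
      ∏ i, ((frobInv p S)^[K] (x i)) ^ (a i * p ^ (K - k)) := by
  refine Finset.prod_congr rfl fun i _ => ?_
  have key : (frobInv p S)^[k] (x i) = ((frobInv p S)^[K] (x i)) ^ p ^ (K - k) := by
    have h2 : (frobInv p S)^[K] (x i) = (frobInv p S)^[k] ((frobInv p S)^[K - k] (x i)) := by
      rw [← Function.iterate_add_apply]
      congr 1
      omega
    rw [h2, frobInv_iterate_pow', frobInv_iterate_pow_pow]
  rw [key, ← pow_mul, mul_comm (p ^ (K - k)) (a i)]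

theorem Ih_mul {x : Fin (m + 1) → S} {d e : ℕ} {a b : S}
    (ha : a ∈ Ih p x d) (hb : b ∈ Ih p x e) : a * b ∈ Ih p x (d + e) := by
  induction ha using Submodule.span_induction with
  | mem g hg =>
    obtain ⟨k, c, hk, rfl⟩ := hg
    induction hb using Submodule.span_induction with
    | mem g' hg' =>
      obtain ⟨k', c', hk', rfl⟩ := hg'
      rw [gen_level_up k (max k k') (le_max_left _ _) c,
        gen_level_up k' (max k k') (le_max_right _ _) c', ← Finset.prod_mul_distrib]
      have heq : ∀ i : Fin (m+1), ((frobInv p S)^[max k k'] (x i)) ^ (c i * p ^ (max k k' - k)) *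
          ((frobInv p S)^[max k k'] (x i)) ^ (c' i * p ^ (max k k' - k')) =
          ((frobInv p S)^[max k k'] (x i)) ^
            (c i * p ^ (max k k' - k) + c' i * p ^ (max k k' - k')) := by
        intro i; rw [pow_add]
      rw [Finset.prod_congr rfl fun i _ => heq i]
      apply gen_mem_Ih
      rw [Finset.sum_add_distrib, ← Finset.sum_mul, ← Finset.sum_mul]
      have h1 : d * p ^ max k k' ≤ (∑ i, c i) * p ^ (max k k' - k) := by
        calc d * p ^ max k k' = d * p ^ k * p ^ (max k k' - k) := by
              rw [mul_assoc, ← pow_add]; congr 2; omega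
        _ ≤ (∑ i, c i) * p ^ (max k k' - k) := Nat.mul_le_mul_right _ hk
      have h2 : e * p ^ max k k' ≤ (∑ i, c' i) * p ^ (max k k' - k') := by
        calc e * p ^ max k k' = e * p ^ k' * p ^ (max k k' - k') := by
              rw [mul_assoc, ← pow_add]; congr 2; omega
        _ ≤ (∑ i, c' i) * p ^ (max k k' - k') := Nat.mul_le_mul_right _ hk'
      calc (d + e) * p ^ max k k' = d * p ^ max k k' + e * p ^ max k k' := by ring
      _ ≤ _ := Nat.add_le_add h1 h2
    | zero => rw [mul_zero]; exact zero_mem _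
    | add y z hy hz hy' hz' => rw [mul_add]; exact add_mem hy' hz'
    | smul r y hy hy' => rw [smul_eq_mul, mul_left_comm]; exact Ideal.mul_mem_left _ _ hy'
  | zero => rw [zero_mul]; exact zero_mem _
  | add y z hy hz hy' hz' => rw [add_mul]; exact add_mem hy' hz'
  | smul r y hy hy' => rw [smul_eq_mul, mul_assoc]; exact Ideal.mul_mem_left _ _ hy'

theorem Ih_frobInv {x : Fin (m + 1) → S} {d : ℕ} {a : S}
    (ha : a ∈ Ih p x (d * p)) : frobInv p S a ∈ Ih p x d := by
  induction ha using Submodule.span_induction with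
  | mem g hg =>
    obtain ⟨k, c, hk, rfl⟩ := hg
    have key : frobInv p S (∏ i, ((frobInv p S)^[k] (x i)) ^ c i) =
        ∏ i, ((frobInv p S)^[k + 1] (x i)) ^ c i := by
      rw [frobInv_prod]
      refine Finset.prod_congr rfl fun i _ => ?_
      rw [frobInv_pow]
      congr 1
      exact (Function.iterate_succ_apply' (frobInv p S) k (x i)).symm
    rw [key]
    apply gen_mem_Ih
    calc d * p ^ (k + 1) = d * p * p ^ k := by ring
    _ ≤ ∑ i, c i := hk
  | zero => rw [frobInv_zero]; exact zero_mem _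
  | add y z hy hz hy' hz' => rw [frobInv_add]; exact add_mem hy' hz'
  | smul r y hy hy' =>
    rw [smul_eq_mul, frobInv_mul]; exact Ideal.mul_mem_left _ _ hy'

theorem Ih_frob {x : Fin (m + 1) → S} {d : ℕ} {a : S}
    (ha : a ∈ Ih p x d) : a ^ p ∈ Ih p x (d * p) := by
  induction ha using Submodule.span_induction with
  | mem g hg =>
    obtain ⟨k, c, hk, rfl⟩ := hg
    rw [← Finset.prod_pow]
    have : ∀ i : Fin (m+1), (((frobInv p S)^[k] (x i)) ^ c i) ^ p =
        ((frobInv p S)^[k] (x i)) ^ (c i * p) := fun i => by rw [← pow_mul]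
    rw [Finset.prod_congr rfl fun i _ => this i]
    apply gen_mem_Ih
    rw [← Finset.sum_mul]
    calc d * p * p ^ k = (d * p ^ k) * p := by ring
    _ ≤ (∑ i, c i) * p := Nat.mul_le_mul_right _ hk
  | zero => rw [zero_pow hp.out.ne_zero]; exact zero_mem _
  | add y z hy hz hy' hz' => rw [add_pow_char]; exact add_mem hy' hz'
  | smul r y hy hy' => rw [smul_eq_mul, mul_pow]; exact Ideal.mul_mem_left _ _ hy'

theorem Ih_frob_iter {x : Fin (m + 1) → S} {d : ℕ} {a : S} (n : ℕ)
    (ha : a ∈ Ih p x d) : a ^ p ^ n ∈ Ih p x (d * p ^ n) := by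
  induction n with
  | zero => simpa using ha
  | succ n ih =>
    have := Ih_frob (x := x) ih
    rw [pow_succ, pow_mul, ← mul_assoc]
    exact this

theorem xpow_mem_Ih {x : Fin (m + 1) → S} (i : Fin (m + 1)) (N : ℕ) :
    x i ^ N ∈ Ih p x N := by
  have key : (∏ j, ((frobInv p S)^[0] (x j)) ^ (if j = i then N else 0)) = x i ^ N := by
    rw [Finset.prod_eq_single i (fun j _ hj => by rw [if_neg hj, pow_zero])
      (fun h => absurd (Finset.mem_univ i) h), if_pos rfl]
    simp
  rw [← key]
  exact gen_mem_Ih (by simp)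

theorem spanx_pow_le_Ih (x : Fin (m + 1) → S) (c : ℕ) :
    (Ideal.span (Set.range x)) ^ c ≤ Ih p x c := by
  induction c with
  | zero => rw [pow_zero, Ideal.one_eq_top, Ih_zero]
  | succ c ih =>
    rw [pow_succ]
    apply Ideal.mul_le.2
    intro r hr s hs
    have hs1 : s ∈ Ih p x 1 := by
      refine Ideal.span_le.2 ?_ hs
      rintro g ⟨i, rfl⟩
      simpa using xpow_mem_Ih i 1
    exact Ih_mul (ih hr) hs1

theorem Ih_decomp {x : Fin (m + 1) → S} {d N : ℕ} (hdN : (m + 1) * N ≤ d) {t : S}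
    (ht : t ∈ Ih p x d) :
    ∃ s : Fin (m + 1) → S, (∀ i, s i ∈ Ih p x (d - N)) ∧ t = ∑ i, x i ^ N * s i := by
  induction ht using Submodule.span_induction with
  | mem g hg =>
    obtain ⟨k, a, hk, rfl⟩ := hg
    -- pigeonhole
    have hpig : ∃ i₀ : Fin (m + 1), N * p ^ k ≤ a i₀ := by
      by_contra hcon
      push_neg at hcon
      have hsum : ∑ i, a i < ∑ _i : Fin (m + 1), N * p ^ k := by
        apply Finset.sum_lt_sum_of_nonempty Finset.univ_nonempty
        intro i _
        exact hcon i
      rw [Finset.sum_const, Finset.card_univ, Fintype.card_fin, smul_eq_mul] at hsum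
      have h1 : d * p ^ k ≤ ∑ i, a i := hk
      have h2 : (m + 1) * N * p ^ k ≤ d * p ^ k := Nat.mul_le_mul_right _ hdN
      rw [mul_assoc] at h2
      omega
    obtain ⟨i₀, hi₀⟩ := hpig
    set a' : Fin (m + 1) → ℕ := Function.update a i₀ (a i₀ - N * p ^ k) with ha'
    refine ⟨fun i => if i = i₀ then ∏ j, ((frobInv p S)^[k] (x j)) ^ a' j else 0, ?_, ?_⟩
    · intro i
      dsimp only
      by_cases h : i = i₀
      · rw [if_pos h]
        apply gen_mem_Ih
        have hsum' : ∑ j, a' j + N * p ^ k = ∑ j, a j := by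
          rw [ha']
          rw [← Finset.add_sum_erase Finset.univ (Function.update a i₀ (a i₀ - N * p ^ k))
              (Finset.mem_univ i₀),
            ← Finset.add_sum_erase Finset.univ a (Finset.mem_univ i₀), Function.update_self]
          have herase : ∑ j ∈ Finset.univ.erase i₀, Function.update a i₀ (a i₀ - N * p ^ k) j =
              ∑ j ∈ Finset.univ.erase i₀, a j :=
            Finset.sum_congr rfl fun j hj => Function.update_of_ne (Finset.mem_erase.1 hj).1 _ _
          rw [herase]
          omega
        have : (d - N) * p ^ k = d * p ^ k - N * p ^ k := by
          rw [Nat.sub_mul]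
        omega
      · rw [if_neg h]; exact zero_mem _
    · dsimp only
      simp only [mul_ite, mul_zero]
      rw [Finset.sum_ite_eq' Finset.univ i₀
        (fun i => x i ^ N * ∏ j, ((frobInv p S)^[k] (x j)) ^ a' j), if_pos (Finset.mem_univ i₀)]
      have hx : x i₀ ^ N = ((frobInv p S)^[k] (x i₀)) ^ (N * p ^ k) := by
        rw [mul_comm N (p ^ k), pow_mul, frobInv_iterate_pow_pow]
      have hprod : ((frobInv p S)^[k] (x i₀)) ^ (N * p ^ k) *
          ∏ j, ((frobInv p S)^[k] (x j)) ^ a' j =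
          ∏ j, ((frobInv p S)^[k] (x j)) ^ a j := by
        rw [← Finset.mul_prod_erase Finset.univ
            (fun j => ((frobInv p S)^[k] (x j)) ^ a' j) (Finset.mem_univ i₀),
          ← Finset.mul_prod_erase Finset.univ
            (fun j => ((frobInv p S)^[k] (x j)) ^ a j) (Finset.mem_univ i₀),
          ← mul_assoc, ← pow_add]
        have h1 : N * p ^ k + a' i₀ = a i₀ := by rw [ha', Function.update_self]; omega
        rw [h1]
        congr 1
        exact Finset.prod_congr rfl fun j hj => by
          rw [ha', Function.update_of_ne (Finset.mem_erase.1 hj).1]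
      rw [hx, hprod]
  | zero =>
    exact ⟨0, fun i => zero_mem _, by simp⟩
  | add y z hy hz hy' hz' =>
    obtain ⟨s₁, hs₁, rfl⟩ := hy'
    obtain ⟨s₂, hs₂, rfl⟩ := hz'
    exact ⟨s₁ + s₂, fun i => add_mem (hs₁ i) (hs₂ i), by
      rw [← Finset.sum_add_distrib]
      exact Finset.sum_congr rfl fun i _ => by rw [Pi.add_apply, mul_add]⟩
  | smul r y hy hy' =>
    obtain ⟨s, hs, rfl⟩ := hy'
    refine ⟨fun i => r * s i, fun i => Ideal.mul_mem_left _ _ (hs i), ?_⟩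
    rw [smul_eq_mul, Finset.mul_sum]
    exact Finset.sum_congr rfl fun i _ => by ring

end Perfect


section Wrappers

variable {S : Type*} [CommRing S]

/-- Rees closure for a submultiplicative family of ideals. -/
theorem rees_ideal (J : ℕ → Ideal S) (htop : J 0 = ⊤)
    (hmul : ∀ u v a b, a ∈ J u → b ∈ J v → a * b ∈ J (u + v)) :
    (∀ (w v : WittVector p S), (∀ n, w.coeff n ∈ J (p ^ n)) → (∀ n, v.coeff n ∈ J (p ^ n)) →
        ∀ n, (w - v).coeff n ∈ J (p ^ n)) ∧
      (∀ (w v : WittVector p S), (∀ n, w.coeff n ∈ J (p ^ n)) →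
        ∀ n, (w * v).coeff n ∈ J (p ^ n)) ∧
      (∀ (w v : WittVector p S), (∀ n, w.coeff n ∈ J (p ^ n)) → (∀ n, v.coeff n ∈ J (p ^ n)) →
        ∀ n, (w + v).coeff n ∈ J (p ^ n)) := by
  refine rees_closure (fun k => (J k).toAddSubgroup) (fun s => ?_)
    (fun u v a b ha hb => hmul u v a b ha hb)
  rw [Submodule.mem_toAddSubgroup, htop]
  exact Submodule.mem_top

/-- Rees closure for a submultiplicative family of norm balls. -/
theorem rees_ball (nm : S → ℝ) (h0 : nm 0 = 0)
    (hna : ∀ s t, nm (s - t) ≤ max (nm s) (nm t))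
    (hsm : ∀ s t, nm (s * t) ≤ nm s * nm t) (hnonneg : ∀ s, 0 ≤ nm s)
    (r : ℕ → ℝ) (hr0 : ∀ k, 0 ≤ r k) (hrtop : ∀ s : S, nm s ≤ r 0)
    (hrmul : ∀ u v, r u * r v ≤ r (u + v)) :
    (∀ (w v : WittVector p S), (∀ n, nm (w.coeff n) ≤ r (p ^ n)) →
        (∀ n, nm (v.coeff n) ≤ r (p ^ n)) → ∀ n, nm ((w - v).coeff n) ≤ r (p ^ n)) ∧
      (∀ (w v : WittVector p S), (∀ n, nm (w.coeff n) ≤ r (p ^ n)) →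
        ∀ n, nm ((w * v).coeff n) ≤ r (p ^ n)) ∧
      (∀ (w v : WittVector p S), (∀ n, nm (w.coeff n) ≤ r (p ^ n)) →
        (∀ n, nm (v.coeff n) ≤ r (p ^ n)) → ∀ n, nm ((w + v).coeff n) ≤ r (p ^ n)) := by
  have hneg : ∀ s : S, nm (-s) ≤ nm s := by
    intro s
    have := hna 0 s
    simpa [h0, max_eq_right (hnonneg s)] using this
  refine rees_closure (fun k =>
    { carrier := {s | nm s ≤ r k}
      zero_mem' := by simpa [h0] using hr0 k
      add_mem' := by
        intro a b ha hb
        have h1 : a + b = a - (-b) := by ring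
        have h2 := hna a (-b)
        rw [← h1] at h2
        exact le_trans h2 (max_le ha (le_trans (hneg b) hb))
      neg_mem' := fun {a} ha => le_trans (hneg a) ha }) hrtop ?_
  intro u v a b ha hb
  exact le_trans (hsm a b) (le_trans (mul_le_mul ha hb (hnonneg b) (hr0 u)) (hrmul u v))

end Wrappers

section PerfectWitt

variable {S : Type*} [CommRing S] [CharP S p] [PerfectRing S p]

theorem p_mul_mk_frobInv (w : WittVector p S) (h0 : w.coeff 0 = 0) :
    (p : WittVector p S) * WittVector.mk p (fun n => frobInv p S (w.coeff (n + 1))) = w := by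
  ext n
  cases n with
  | zero => rw [p_mul_coeff_zero, h0]
  | succ k => rw [p_mul_coeff_succ, WittVector.coeff_mk, frobInv_pow_p]

end PerfectWitt

end Stmt16Aux

open Filter

/-- For `(R, R⁺)` an analytic perfectoid pair of characteristic `p` with ideal of
definition `(x₀,…,x_m) ⊂ R⁺`, the Gauss norm on `W(R⁺)` induces the
`([x₀],…,[x_m])`-adic topology, and the weighted Gauss norm (with `|p| = ρ`)
induces the `(p,[x₀],…,[x_m])`-adic topology. -/
theorem stmt16 (p : ℕ) [Fact p.Prime] {S : Type*} [CommRing S] [CharP S p]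
    -- S = R⁺, a perfect uniform Banach ring with all elements of norm ≤ 1
    (nm : S → ℝ) (hnonneg : ∀ s, 0 ≤ nm s) (heq0 : ∀ s, nm s = 0 ↔ s = 0)
    (hna : ∀ s t, nm (s - t) ≤ max (nm s) (nm t))
    (hsm : ∀ s t, nm (s * t) ≤ nm s * nm t)
    (hpm : ∀ (s : S) (n : ℕ), 1 ≤ n → nm (s ^ n) = nm s ^ n)
    (hle1 : ∀ s, nm s ≤ 1)
    (hperfS : Function.Bijective fun s : S => s ^ p)
    -- the ambient analytic perfectoid ring R with R⁺ its ring of definition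
    {R : Type*} [CommRing R] [CharP R p] (nmR : R → ℝ)
    (ι : S →+* R) (hινm : ∀ s, nmR (ι s) = nm s)
    (hball : ∀ r : R, nmR r ≤ 1 → ∃ s : S, ι s = r)
    (m : ℕ) (x : Fin (m + 1) → S)
    -- (x₀,…,x_m) is an ideal of definition of R⁺: the norm topology is (x)-adic
    (hadic : (∀ N : ℕ, ∃ δ : ℝ, 0 < δ ∧ ∀ s : S, nm s < δ →
        s ∈ Ideal.span (Set.range x) ^ N) ∧
      ∀ δ : ℝ, 0 < δ → ∃ N : ℕ, ∀ s ∈ Ideal.span (Set.range x) ^ N, nm s < δ)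
    -- analyticity: the x_i generate the unit ideal of R
    (hspanR : Ideal.span (Set.range fun i => ι (x i)) = ⊤) :
    -- Teichmüller coordinates of a Witt vector, via the inverse of Frobenius
    let tc : WittVector p S → ℕ → S := fun w n =>
      (Function.invFun fun y : S => y ^ p)^[n] (w.coeff n)
    let G : WittVector p S → ℝ := fun w => ⨆ n, nm (tc w n)
    let I₁ : Ideal (WittVector p S) :=
      Ideal.span (Set.range fun i => WittVector.teichmuller p (x i))
    let I₂ : Ideal (WittVector p S) :=
      Ideal.span (insert (p : WittVector p S)
        (Set.range fun i => WittVector.teichmuller p (x i)))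
    -- the Gauss norm induces the ([x₀],…,[x_m])-adic topology:
    ((∀ N : ℕ, ∃ δ : ℝ, 0 < δ ∧ ∀ w : WittVector p S, G w < δ → w ∈ I₁ ^ N) ∧
      (∀ δ : ℝ, 0 < δ → ∃ N : ℕ, ∀ w ∈ I₁ ^ N, G w < δ)) ∧
    -- the weighted Gauss norm induces the (p,[x₀],…,[x_m])-adic topology:
    ∀ ρ : ℝ, 0 < ρ → ρ < 1 →
      let Gρ : WittVector p S → ℝ := fun w => ⨆ n, ρ ^ n * nm (tc w n)
      (∀ N : ℕ, ∃ δ : ℝ, 0 < δ ∧ ∀ w : WittVector p S, Gρ w < δ → w ∈ I₂ ^ N) ∧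
      (∀ δ : ℝ, 0 < δ → ∃ N : ℕ, ∀ w ∈ I₂ ^ N, Gρ w < δ) := by
  classical
  intro tc G I₁ I₂
  open Stmt16Aux in
  haveI hPR : PerfectRing S p := by
    refine ⟨?_⟩
    have h : ⇑(_root_.frobenius S p) = fun s : S => s ^ p := funext fun s => frobenius_def p s
    exact hperfS
  have hpp : p.Prime := Fact.out
  have nm0 : nm 0 = 0 := (heq0 0).2 rfl
  -- identification of tc
  have hinv : (Function.invFun fun y : S => y ^ p) = Stmt16Aux.frobInv p S := by
    funext z
    apply hperfS.injective
    show (Function.invFun (fun y : S => y ^ p) z) ^ p = (Stmt16Aux.frobInv p S z) ^ p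
    rw [Stmt16Aux.frobInv_pow_p]
    exact Function.rightInverse_invFun hperfS.surjective z
  have htc : ∀ (w : WittVector p S) (n : ℕ),
      tc w n = (Stmt16Aux.frobInv p S)^[n] (w.coeff n) := by
    intro w n
    show (Function.invFun fun y : S => y ^ p)^[n] (w.coeff n) = _
    rw [hinv]
  have hcoeff_eq : ∀ (w : WittVector p S) (n : ℕ), w.coeff n = (tc w n) ^ p ^ n := by
    intro w n
    rw [htc, Stmt16Aux.frobInv_iterate_pow_pow]
  have hppow_pos : ∀ n : ℕ, 1 ≤ p ^ n := fun n => Nat.one_le_iff_ne_zero.2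
    (pow_ne_zero _ hpp.ne_zero)
  have hnm_tc_pow : ∀ (w : WittVector p S) (n : ℕ),
      nm (tc w n) ^ p ^ n = nm (w.coeff n) := by
    intro w n
    rw [← hpm _ _ (hppow_pos n), ← hcoeff_eq]
  have hbddG : ∀ w : WittVector p S, BddAbove (Set.range fun n => nm (tc w n)) := by
    intro w
    refine ⟨1, ?_⟩
    rintro y ⟨n, rfl⟩
    exact hle1 _
  by_cases hss : Subsingleton S
  · -- degenerate case
    have hW : ∀ u v : WittVector p S, u = v := by
      intro u v; ext n; exact Subsingleton.elim _ _
    have hGz : ∀ w : WittVector p S, G w = 0 := by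
      intro w
      show (⨆ n, nm (tc w n)) = 0
      have : ∀ n, nm (tc w n) = 0 := by
        intro n
        rw [Subsingleton.elim (tc w n) 0, nm0]
      simp only [this]
      exact ciSup_const
    constructor
    · constructor
      · intro N
        exact ⟨1, one_pos, fun w _ => hW w 0 ▸ zero_mem _⟩
      · intro δ hδ
        exact ⟨0, fun w _ => by rw [hGz w]; exact hδ⟩
    · intro ρ hρ0 hρ1
      intro Gρ
      have hGρz : ∀ w : WittVector p S, Gρ w = 0 := by
        intro w
        show (⨆ n, ρ ^ n * nm (tc w n)) = 0
        have : ∀ n, ρ ^ n * nm (tc w n) = 0 := by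
          intro n
          rw [Subsingleton.elim (tc w n) 0, nm0, mul_zero]
        simp only [this]
        exact ciSup_const
      constructor
      · intro N
        exact ⟨1, one_pos, fun w _ => hW w 0 ▸ zero_mem _⟩
      · intro δ hδ
        exact ⟨0, fun w _ => by rw [hGρz w]; exact hδ⟩
  haveI : Nontrivial S := not_subsingleton_iff_nontrivial.mp hss
  -- the norm of 1 is at least 1
  have hnm1 : 1 ≤ nm 1 := by
    by_contra hlt
    push_neg at hlt
    have h1 : nm 1 ≤ nm 1 * nm 1 := by
      have := hsm 1 1
      rwa [one_mul] at this
    rcases lt_or_eq_of_le (hnonneg 1) with hpos | hzero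
    · nlinarith
    · exact one_ne_zero ((heq0 1).1 hzero.symm)
  -- ε, the max norm of the x i
  set ε : ℝ := Finset.univ.sup' Finset.univ_nonempty (fun i => nm (x i)) with hεdef
  have hεx : ∀ i, nm (x i) ≤ ε := fun i => by
    rw [hεdef]
    exact Finset.le_sup' (fun i => nm (x i)) (Finset.mem_univ i)
  have hε0 : 0 ≤ ε := le_trans (hnonneg (x 0)) (hεx 0)
  have hε1 : ε < 1 := by
    obtain ⟨N₁, hN₁⟩ := hadic.2 1 one_pos
    have hN₁pos : 1 ≤ N₁ := by
      by_contra h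
      push_neg at h
      interval_cases N₁
      have := hN₁ 1 (by rw [pow_zero, Ideal.one_eq_top]; exact Submodule.mem_top)
      linarith
    rw [Finset.sup'_lt_iff]
    intro i _
    have hx1 : x i ^ N₁ ∈ Ideal.span (Set.range x) ^ N₁ :=
      Ideal.pow_mem_pow (Ideal.subset_span (Set.mem_range_self i)) N₁
    have := hN₁ _ hx1
    rw [hpm _ _ hN₁pos] at this
    by_contra hc
    push_neg at hc
    have h2 : (1 : ℝ) ≤ nm (x i) ^ N₁ := by
      calc (1 : ℝ) = 1 ^ N₁ := (one_pow _).symm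
      _ ≤ nm (x i) ^ N₁ := pow_le_pow_left₀ (by norm_num) hc _
    linarith
  -- ball closure machinery, for exponent families
  have ballfam := fun (E : ℕ → ℕ) (hE0 : E 0 = 0) (hEsub : ∀ u v, E (u + v) ≤ E u + E v) =>
    Stmt16Aux.rees_ball (p := p) nm nm0 hna hsm hnonneg (fun k => ε ^ E k)
      (fun k => pow_nonneg hε0 _)
      (fun s => by
        show nm s ≤ ε ^ E 0
        rw [hE0, pow_zero]; exact hle1 s)
      (fun u v => by
        show ε ^ E u * ε ^ E v ≤ ε ^ E (u + v)
        rw [← pow_add]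
        exact pow_le_pow_of_le_one hε0 hε1.le (hEsub u v))
  -- ideal closure machinery
  have idealfam := fun (c : ℕ) =>
    Stmt16Aux.rees_ideal (p := p) (fun k => Stmt16Aux.Ih p x (c * k))
      (by show Stmt16Aux.Ih p x (c * 0) = ⊤; rw [mul_zero, Stmt16Aux.Ih_zero])
      (fun u v a b ha hb => by
        show a * b ∈ Stmt16Aux.Ih p x (c * (u + v))
        rw [mul_add]
        exact Stmt16Aux.Ih_mul ha hb)
  -- norms of coefficients of elements of I₁ ^ K
  have hpowI₁ : ∀ (K : ℕ) (w : WittVector p S), w ∈ I₁ ^ K →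
      ∀ n, nm (w.coeff n) ≤ ε ^ (K * p ^ n) := by
    intro K
    induction K with
    | zero =>
      intro w _ n
      rw [zero_mul, pow_zero]
      exact hle1 _
    | succ K ih =>
      have hbK := ballfam (fun k => K * k) (by simp) (fun u v => le_of_eq (by ring))
      have hbK1 := ballfam (fun k => (K + 1) * k) (by simp) (fun u v => le_of_eq (by ring))
      have key : ∀ b ∈ I₁, ∀ a : WittVector p S, (∀ n, nm (a.coeff n) ≤ ε ^ (K * p ^ n)) →
          ∀ n, nm ((a * b).coeff n) ≤ ε ^ ((K + 1) * p ^ n) := by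
        intro b hb
        induction hb using Submodule.span_induction with
        | mem g hg =>
          obtain ⟨i, rfl⟩ := hg
          intro a ha n
          rw [mul_comm, Stmt16Aux.teichmuller_mul_coeff]
          calc nm (x i ^ p ^ n * a.coeff n) ≤ nm (x i ^ p ^ n) * nm (a.coeff n) := hsm _ _
          _ ≤ ε ^ p ^ n * ε ^ (K * p ^ n) := by
              apply mul_le_mul _ (ha n) (hnonneg _) (pow_nonneg hε0 _)
              rw [hpm _ _ (hppow_pos n)]
              exact pow_le_pow_left₀ (hnonneg _) (hεx i) _
          _ = ε ^ ((K + 1) * p ^ n) := by rw [← pow_add]; ring_nf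
        | zero =>
          intro a ha n
          rw [mul_zero, WittVector.zero_coeff, nm0]
          exact pow_nonneg hε0 _
        | add y z hy hz hy' hz' =>
          intro a ha n
          rw [mul_add]
          exact hbK1.2.2 _ _ (fun n => hy' a ha n) (fun n => hz' a ha n) n
        | smul r y hy hy' =>
          intro a ha n
          rw [smul_eq_mul, ← mul_assoc]
          exact hy' (a * r) (fun n => hbK.2.1 a r ha n) n
      intro w hw
      rw [pow_succ] at hw
      refine Submodule.mul_induction_on hw ?_ ?_
      · intro a ha b hb
        exact key b hb a (ih a ha)
      · intro y z hy hz
        exact hbK1.2.2 _ _ hy hz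
  -- norms of coefficients of elements of I₂ ^ K
  have hpowI₂ : ∀ (K : ℕ) (w : WittVector p S), w ∈ I₂ ^ K →
      ∀ n, nm (w.coeff n) ≤ ε ^ ((K - n) * p ^ n) := by
    have hE := fun (K : ℕ) => ballfam (fun k => (K - Nat.log p k) * k)
      (by simp)
      (fun u v => by
        have h1 : (K - Nat.log p (u + v)) * (u + v) =
            u * (K - Nat.log p (u + v)) + v * (K - Nat.log p (u + v)) := by ring
        have h2 : u * (K - Nat.log p (u + v)) ≤ u * (K - Nat.log p u) :=
          Nat.mul_le_mul_left _ (Nat.sub_le_sub_left (Nat.log_mono_right (Nat.le_add_right u v)) K)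
        have h3 : v * (K - Nat.log p (u + v)) ≤ v * (K - Nat.log p v) :=
          Nat.mul_le_mul_left _ (Nat.sub_le_sub_left (Nat.log_mono_right (Nat.le_add_left v u)) K)
        calc (K - Nat.log p (u + v)) * (u + v) ≤
            u * (K - Nat.log p u) + v * (K - Nat.log p v) := by omega
        _ = (K - Nat.log p u) * u + (K - Nat.log p v) * v := by ring)
    have hlogpow : ∀ n : ℕ, Nat.log p (p ^ n) = n := fun n => Nat.log_pow hpp.one_lt n
    have hconv : ∀ (K n : ℕ) (z : S), nm z ≤ ε ^ ((K - Nat.log p (p ^ n)) * p ^ n) ↔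
        nm z ≤ ε ^ ((K - n) * p ^ n) := by
      intro K n z
      rw [hlogpow n]
    intro K
    induction K with
    | zero =>
      intro w _ n
      rw [Nat.zero_sub, zero_mul, pow_zero]
      exact hle1 _
    | succ K ih =>
      have key : ∀ b ∈ I₂, ∀ a : WittVector p S,
          (∀ n, nm (a.coeff n) ≤ ε ^ ((K - n) * p ^ n)) →
          ∀ n, nm ((a * b).coeff n) ≤ ε ^ ((K + 1 - n) * p ^ n) := by
        intro b hb
        induction hb using Submodule.span_induction with
        | mem g hg =>
          rcases hg with hgp | ⟨i, rfl⟩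
          · -- g = p
            subst hgp
            intro a ha n
            cases n with
            | zero =>
              rw [WittVector.mul_charP_coeff_zero, nm0]
              exact pow_nonneg hε0 _
            | succ n =>
              rw [WittVector.mul_charP_coeff_succ, hpm _ _ hpp.one_le]
              calc nm (a.coeff n) ^ p ≤ (ε ^ ((K - n) * p ^ n)) ^ p :=
                    pow_le_pow_left₀ (hnonneg _) (ha n) _
              _ = ε ^ ((K + 1 - (n + 1)) * p ^ (n + 1)) := by
                  rw [← pow_mul]
                  congr 1
                  have : K + 1 - (n + 1) = K - n := by omega
                  rw [this]
                  ring
          · -- g = teichmuller (x i)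
            intro a ha n
            rw [mul_comm, Stmt16Aux.teichmuller_mul_coeff]
            calc nm (x i ^ p ^ n * a.coeff n) ≤ nm (x i ^ p ^ n) * nm (a.coeff n) := hsm _ _
            _ ≤ ε ^ p ^ n * ε ^ ((K - n) * p ^ n) := by
                apply mul_le_mul _ (ha n) (hnonneg _) (pow_nonneg hε0 _)
                rw [hpm _ _ (hppow_pos n)]
                exact pow_le_pow_left₀ (hnonneg _) (hεx i) _
            _ = ε ^ ((K - n + 1) * p ^ n) := by rw [← pow_add]; ring_nf
            _ ≤ ε ^ ((K + 1 - n) * p ^ n) := by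
                apply pow_le_pow_of_le_one hε0 hε1.le
                apply Nat.mul_le_mul_right
                omega
        | zero =>
          intro a ha n
          rw [mul_zero, WittVector.zero_coeff, nm0]
          exact pow_nonneg hε0 _
        | add y z hy hz hy' hz' =>
          intro a ha n
          rw [mul_add]
          rw [← hconv (K+1)]
          exact (hE (K+1)).2.2 _ _ (fun n => (hconv (K+1) n _).2 (hy' a ha n))
            (fun n => (hconv (K+1) n _).2 (hz' a ha n)) n
        | smul r y hy hy' =>
          intro a ha n
          rw [smul_eq_mul, ← mul_assoc]
          refine hy' (a * r) (fun n => ?_) n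
          rw [← hconv K]
          exact (hE K).2.1 a r (fun n => (hconv K n _).2 (ha n)) n
      intro w hw
      rw [pow_succ] at hw
      refine Submodule.mul_induction_on hw ?_ ?_
      · intro a ha b hb
        exact key b hb a (ih a ha)
      · intro y z hy hz n
        rw [← hconv (K+1)]
        exact (hE (K+1)).2.2 _ _ (fun n => (hconv (K+1) n _).2 (hy n))
          (fun n => (hconv (K+1) n _).2 (hz n)) n
  -- MAIN iteration lemma
  have hMAIN : ∀ (N : ℕ) (w : WittVector p S),
      (∀ n, w.coeff n ∈ Stmt16Aux.Ih p x ((m + 1) * N * p ^ n)) → w ∈ I₁ ^ N := by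
    intro N w hw
    have hNc : N ≤ (m + 1) * N := Nat.le_mul_of_pos_left N (Nat.succ_pos m)
    have hfam := idealfam ((m + 1) * N)
    have hstep : ∀ v : WittVector p S,
        (∀ n, v.coeff n ∈ Stmt16Aux.Ih p x ((m + 1) * N * p ^ n)) →
        ∃ (s : Fin (m + 1) → S) (v' : WittVector p S),
          (∀ n, v'.coeff n ∈ Stmt16Aux.Ih p x ((m + 1) * N * p ^ n)) ∧
          v = (∑ i, WittVector.teichmuller p (x i) ^ N * WittVector.teichmuller p (s i)) +
            (p : WittVector p S) * v' := by
      intro v hv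
      have ht0 : v.coeff 0 ∈ Stmt16Aux.Ih p x ((m + 1) * N) := by
        have := hv 0
        rwa [pow_zero, mul_one] at this
      obtain ⟨s, hs, hts⟩ := Stmt16Aux.Ih_decomp (le_refl ((m + 1) * N)) ht0
      have hfi : ∀ i, WittVector.teichmuller p (x i) ^ N * WittVector.teichmuller p (s i) =
          WittVector.teichmuller p (x i ^ N * s i) := by
        intro i
        rw [← map_pow, ← map_mul]
      have humem : ∀ i, x i ^ N * s i ∈ Stmt16Aux.Ih p x ((m + 1) * N) := by
        intro i
        have := Stmt16Aux.Ih_mul (Stmt16Aux.xpow_mem_Ih i N) (hs i)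
        rwa [Nat.add_sub_cancel' hNc] at this
      have hjcoeff : ∀ n, (∑ i, WittVector.teichmuller p (x i) ^ N *
          WittVector.teichmuller p (s i)).coeff n ∈ Stmt16Aux.Ih p x ((m + 1) * N * p ^ n) := by
        have hterm : ∀ (i : Fin (m + 1)) (n : ℕ),
            (WittVector.teichmuller p (x i) ^ N * WittVector.teichmuller p (s i)).coeff n ∈
            Stmt16Aux.Ih p x ((m + 1) * N * p ^ n) := by
          intro i n
          rw [hfi i]
          cases n with
          | zero =>
            rw [WittVector.teichmuller_coeff_zero, pow_zero, mul_one]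
            exact humem i
          | succ n =>
            rw [WittVector.teichmuller_coeff_pos p _ _ (Nat.succ_pos n)]
            exact zero_mem _
        have hsumcl : ∀ (F : Finset (Fin (m + 1))) (f : Fin (m + 1) → WittVector p S),
            (∀ i, ∀ n, (f i).coeff n ∈ Stmt16Aux.Ih p x ((m + 1) * N * p ^ n)) →
            ∀ n, (∑ i ∈ F, f i).coeff n ∈ Stmt16Aux.Ih p x ((m + 1) * N * p ^ n) := by
          intro F f hf
          induction F using Finset.induction_on with
          | empty =>
            intro n
            rw [Finset.sum_empty, WittVector.zero_coeff]
            exact zero_mem _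
          | insert _ _ hni ih =>
            intro n
            rw [Finset.sum_insert hni]
            exact hfam.2.2 _ _ (hf _) ih n
        exact hsumcl Finset.univ _ (fun i n => hterm i n)
      have hrcoeff := hfam.1 v _ hv hjcoeff
      have hr0 : (v - (∑ i, WittVector.teichmuller p (x i) ^ N *
          WittVector.teichmuller p (s i))).coeff 0 = 0 := by
        have hj0 : (∑ i, WittVector.teichmuller p (x i) ^ N *
            WittVector.teichmuller p (s i)).coeff 0 = ∑ i, x i ^ N * s i := by
          have : ∀ z : WittVector p S, z.coeff 0 = WittVector.constantCoeff z := fun z => rfl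
          rw [this, map_sum]
          refine Finset.sum_congr rfl fun i _ => ?_
          rw [← this, hfi i, WittVector.teichmuller_coeff_zero]
        have hsub : ∀ a b : WittVector p S, (a - b).coeff 0 = a.coeff 0 - b.coeff 0 := by
          intro a b
          have : ∀ z : WittVector p S, z.coeff 0 = WittVector.constantCoeff z := fun z => rfl
          rw [this, this, this, map_sub]
        rw [hsub, hj0, ← hts, sub_self]
      refine ⟨s, WittVector.mk p fun n => Stmt16Aux.frobInv p S
        ((v - ∑ i, WittVector.teichmuller p (x i) ^ N *
          WittVector.teichmuller p (s i)).coeff (n + 1)), ?_, ?_⟩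
      · intro n
        rw [WittVector.coeff_mk]
        apply Stmt16Aux.Ih_frobInv
        have := hrcoeff (n + 1)
        rwa [pow_succ, ← mul_assoc] at this
      · have hdiv := Stmt16Aux.p_mul_mk_frobInv _ hr0
        exact (sub_eq_iff_eq_add').1 hdiv.symm
    choose sf vf hvf hveq using hstep
    let E : ℕ → {v : WittVector p S //
        ∀ n, v.coeff n ∈ Stmt16Aux.Ih p x ((m + 1) * N * p ^ n)} :=
      fun k => Nat.rec ⟨w, hw⟩ (fun _ prev => ⟨vf prev.1 prev.2, hvf prev.1 prev.2⟩) k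
    have hE0 : (E 0).1 = w := rfl
    have hEsucc : ∀ k, (E (k + 1)).1 = vf (E k).1 (E k).2 := fun k => rfl
    have hEeq : ∀ k, (E k).1 = (∑ i, WittVector.teichmuller p (x i) ^ N *
        WittVector.teichmuller p (sf (E k).1 (E k).2 i)) +
        (p : WittVector p S) * (E (k + 1)).1 := by
      intro k
      rw [hEsucc]
      exact hveq (E k).1 (E k).2
    have hpart : ∀ K, w = (∑ k ∈ Finset.range K, (p : WittVector p S) ^ k *
        (∑ i, WittVector.teichmuller p (x i) ^ N *
          WittVector.teichmuller p (sf (E k).1 (E k).2 i))) +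
        (p : WittVector p S) ^ K * (E K).1 := by
      intro K
      induction K with
      | zero => simp [hE0]
      | succ K ih =>
        rw [Finset.sum_range_succ, ih]
        conv_lhs => rw [hEeq K]
        ring
    have hVsplit : ∀ (K : ℕ) (i : Fin (m + 1)),
        WittVector.mk p (fun n => sf (E n).1 (E n).2 i ^ p ^ n) =
        (∑ k ∈ Finset.range K, (p : WittVector p S) ^ k *
          WittVector.teichmuller p (sf (E k).1 (E k).2 i)) +
          (p : WittVector p S) ^ K * WittVector.mk p (fun n => (Stmt16Aux.frobInv p S)^[K]
            ((WittVector.mk p (fun n' => sf (E n').1 (E n').2 i ^ p ^ n')).coeff (n + K))) := by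
      intro K i
      ext n
      rw [Stmt16Aux.disj_add_coeff K _ _
        (fun k hk => by rw [Stmt16Aux.teichsum_coeff, if_neg (by omega)])
        (fun k hk => by rw [Stmt16Aux.p_pow_mul_coeff, if_pos hk])]
      by_cases h : n < K
      · rw [if_pos h, Stmt16Aux.teichsum_coeff, if_pos h, WittVector.coeff_mk]
      · rw [if_neg h, Stmt16Aux.p_pow_mul_coeff, if_neg h, WittVector.coeff_mk,
          WittVector.coeff_mk]
        have hnk : n - K + K = n := by omega
        rw [hnk, Stmt16Aux.frobInv_iterate_pow_pow]
    have hswap : ∀ K, (∑ k ∈ Finset.range K, (p : WittVector p S) ^ k *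
        (∑ i, WittVector.teichmuller p (x i) ^ N *
          WittVector.teichmuller p (sf (E k).1 (E k).2 i))) =
        ∑ i, WittVector.teichmuller p (x i) ^ N *
          (∑ k ∈ Finset.range K, (p : WittVector p S) ^ k *
            WittVector.teichmuller p (sf (E k).1 (E k).2 i)) := by
      intro K
      calc (∑ k ∈ Finset.range K, (p : WittVector p S) ^ k *
          (∑ i, WittVector.teichmuller p (x i) ^ N *
            WittVector.teichmuller p (sf (E k).1 (E k).2 i)))
          = ∑ k ∈ Finset.range K, ∑ i, (p : WittVector p S) ^ k *
            (WittVector.teichmuller p (x i) ^ N *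
              WittVector.teichmuller p (sf (E k).1 (E k).2 i)) := by
            exact Finset.sum_congr rfl fun k _ => Finset.mul_sum _ _ _
      _ = ∑ i, ∑ k ∈ Finset.range K, (p : WittVector p S) ^ k *
            (WittVector.teichmuller p (x i) ^ N *
              WittVector.teichmuller p (sf (E k).1 (E k).2 i)) := Finset.sum_comm
      _ = ∑ i, WittVector.teichmuller p (x i) ^ N *
            (∑ k ∈ Finset.range K, (p : WittVector p S) ^ k *
              WittVector.teichmuller p (sf (E k).1 (E k).2 i)) := by
            refine Finset.sum_congr rfl fun i _ => ?_
            rw [Finset.mul_sum]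
            exact Finset.sum_congr rfl fun k _ => by ring
    have hdiff : ∀ K, w - (∑ i, WittVector.teichmuller p (x i) ^ N *
        WittVector.mk p (fun n => sf (E n).1 (E n).2 i ^ p ^ n)) =
        (p : WittVector p S) ^ K * ((E K).1 - ∑ i, WittVector.teichmuller p (x i) ^ N *
          WittVector.mk p (fun n => (Stmt16Aux.frobInv p S)^[K]
            ((WittVector.mk p (fun n' => sf (E n').1 (E n').2 i ^ p ^ n')).coeff (n + K)))) := by
      intro K
      have h1 : (∑ i, WittVector.teichmuller p (x i) ^ N *
          WittVector.mk p (fun n => sf (E n).1 (E n).2 i ^ p ^ n)) =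
          (∑ k ∈ Finset.range K, (p : WittVector p S) ^ k *
            (∑ i, WittVector.teichmuller p (x i) ^ N *
              WittVector.teichmuller p (sf (E k).1 (E k).2 i))) +
          (p : WittVector p S) ^ K * (∑ i, WittVector.teichmuller p (x i) ^ N *
            WittVector.mk p (fun n => (Stmt16Aux.frobInv p S)^[K]
              ((WittVector.mk p (fun n' => sf (E n').1 (E n').2 i ^ p ^ n')).coeff (n + K)))) := by
        rw [hswap K, Finset.mul_sum, ← Finset.sum_add_distrib]
        refine Finset.sum_congr rfl fun i _ => ?_
        conv_lhs => rw [hVsplit K i]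
        ring
      rw [hpart K, h1]
      ring
    have hzero : w - (∑ i, WittVector.teichmuller p (x i) ^ N *
        WittVector.mk p (fun n => sf (E n).1 (E n).2 i ^ p ^ n)) = 0 := by
      ext n
      rw [hdiff (n + 1), Stmt16Aux.p_pow_mul_coeff, if_pos (Nat.lt_succ_self n),
        WittVector.zero_coeff]
    rw [sub_eq_zero.mp hzero]
    apply Submodule.sum_mem
    intro i _
    exact Ideal.mul_mem_right _ _
      (Ideal.pow_mem_pow (Ideal.subset_span (Set.mem_range_self i)) N)
  -- entry into the filtration
  have hIh_entry : ∀ (N : ℕ) (z : S), z ∈ Ideal.span (Set.range x) ^ ((m + 1) * N) →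
      ∀ n, (z ^ p ^ n) ∈ Stmt16Aux.Ih p x ((m + 1) * N * p ^ n) := by
    intro N z hz n
    exact Stmt16Aux.Ih_frob_iter n ((Stmt16Aux.spanx_pow_le_Ih x ((m + 1) * N)) hz)
  constructor
  · constructor
    · -- part 1a
      intro N
      obtain ⟨δ, hδpos, hδ⟩ := hadic.1 ((m + 1) * N)
      refine ⟨δ, hδpos, fun w hw => ?_⟩
      apply hMAIN N w
      intro n
      have h1 : nm (tc w n) < δ := lt_of_le_of_lt (le_ciSup (hbddG w) n) hw
      have h2 := hδ _ h1
      rw [hcoeff_eq w n]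
      exact hIh_entry N _ h2 n
    · -- part 1b
      intro δ hδpos
      obtain ⟨N, hN⟩ := exists_pow_lt_of_lt_one hδpos hε1
      refine ⟨N, fun w hw => ?_⟩
      have hb : ∀ n, nm (tc w n) ≤ ε ^ N := by
        intro n
        have h3 : nm (tc w n) ^ p ^ n ≤ (ε ^ N) ^ p ^ n := by
          rw [hnm_tc_pow, ← pow_mul]
          exact hpowI₁ N w hw n
        exact le_of_pow_le_pow_left₀ (pow_ne_zero _ hpp.ne_zero) (pow_nonneg hε0 N) h3
      exact lt_of_le_of_lt (ciSup_le hb) hN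
  · intro ρ hρ0 hρ1
    intro Gρ
    set θ : ℝ := max ε ρ with hθdef
    have hθ1 : θ < 1 := max_lt hε1 hρ1
    have hθ0 : 0 ≤ θ := le_trans hε0 (le_max_left _ _)
    have hbddGρ : ∀ w : WittVector p S,
        BddAbove (Set.range fun n => ρ ^ n * nm (tc w n)) := by
      intro w
      refine ⟨1, ?_⟩
      rintro y ⟨n, rfl⟩
      calc ρ ^ n * nm (tc w n) ≤ 1 * 1 :=
            mul_le_mul (pow_le_one₀ hρ0.le hρ1.le) (hle1 _) (hnonneg _) one_pos.le
      _ = 1 := mul_one 1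
    have hpI₂ : (p : WittVector p S) ∈ I₂ := Ideal.subset_span (Set.mem_insert _ _)
    constructor
    · -- part 2a
      intro N
      rcases Nat.eq_zero_or_pos N with rfl | hNpos
      · exact ⟨1, one_pos, fun w _ => by
          rw [pow_zero, Ideal.one_eq_top]; exact Submodule.mem_top⟩
      obtain ⟨δ, hδpos, hδ⟩ := hadic.1 ((m + 1) * N)
      refine ⟨δ * ρ ^ (N - 1), mul_pos hδpos (pow_pos hρ0 _), fun w hw => ?_⟩
      have hdec : w = (∑ n ∈ Finset.range N,
            (p : WittVector p S) ^ n * WittVector.teichmuller p (tc w n)) +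
          (p : WittVector p S) ^ N *
            WittVector.mk p (fun k => (Stmt16Aux.frobInv p S)^[N] (w.coeff (k + N))) := by
        ext n
        rw [Stmt16Aux.disj_add_coeff N _ _
          (fun k hk => by rw [Stmt16Aux.teichsum_coeff, if_neg (by omega)])
          (fun k hk => by rw [Stmt16Aux.p_pow_mul_coeff, if_pos hk])]
        by_cases h : n < N
        · rw [if_pos h, Stmt16Aux.teichsum_coeff, if_pos h, ← hcoeff_eq]
        · rw [if_neg h, Stmt16Aux.p_pow_mul_coeff, if_neg h, WittVector.coeff_mk,
            Stmt16Aux.frobInv_iterate_pow_pow]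
          congr 1
          omega
      have hI₁₂ : I₁ ≤ I₂ := Ideal.span_mono (Set.subset_insert _ _)
      rw [hdec]
      apply add_mem
      · apply Submodule.sum_mem
        intro n hn
        rw [Finset.mem_range] at hn
        have h1 : ρ ^ n * nm (tc w n) < δ * ρ ^ (N - 1) :=
          lt_of_le_of_lt (le_ciSup (hbddGρ w) n) hw
        have h2 : δ * ρ ^ (N - 1) ≤ ρ ^ n * δ := by
          rw [mul_comm]
          apply mul_le_mul_of_nonneg_right _ hδpos.le
          exact pow_le_pow_of_le_one hρ0.le hρ1.le (by omega)
        have h3 : nm (tc w n) < δ :=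
          lt_of_mul_lt_mul_left (lt_of_lt_of_le h1 h2) (pow_nonneg hρ0.le n)
        have h5 := hδ _ h3
        have h6 : WittVector.teichmuller p (tc w n) ∈ I₁ ^ N := by
          apply hMAIN N
          intro k
          cases k with
          | zero =>
            rw [WittVector.teichmuller_coeff_zero]
            have := (Stmt16Aux.spanx_pow_le_Ih (p := p) x ((m + 1) * N)) h5
            rwa [pow_zero, mul_one]
          | succ k =>
            rw [WittVector.teichmuller_coeff_pos p _ _ (Nat.succ_pos k)]
            exact zero_mem _
        have h8 : I₁ ^ N ≤ I₂ ^ (N - n) :=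
          le_trans (Ideal.pow_right_mono hI₁₂ N) (Ideal.pow_le_pow_right (by omega))
        have h9 := Ideal.mul_mem_mul (Ideal.pow_mem_pow hpI₂ n) (h8 h6)
        rw [← pow_add] at h9
        have h10 : n + (N - n) = N := by omega
        rwa [h10] at h9
      · exact Ideal.mul_mem_right _ _ (Ideal.pow_mem_pow hpI₂ N)
    · -- part 2b
      intro δ hδpos
      obtain ⟨N, hN⟩ := exists_pow_lt_of_lt_one hδpos hθ1
      refine ⟨N, fun w hw => ?_⟩
      have hcb := hpowI₂ N w hw
      have hb : ∀ n, ρ ^ n * nm (tc w n) ≤ θ ^ N := by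
        intro n
        by_cases h : n ≤ N
        · have h1 : nm (tc w n) ≤ ε ^ (N - n) := by
            have h3 : nm (tc w n) ^ p ^ n ≤ (ε ^ (N - n)) ^ p ^ n := by
              rw [hnm_tc_pow, ← pow_mul]
              exact hcb n
            exact le_of_pow_le_pow_left₀ (pow_ne_zero _ hpp.ne_zero) (pow_nonneg hε0 _) h3
          calc ρ ^ n * nm (tc w n) ≤ θ ^ n * θ ^ (N - n) :=
                mul_le_mul (pow_le_pow_left₀ hρ0.le (le_max_right ε ρ) n)
                  (le_trans h1 (pow_le_pow_left₀ hε0 (le_max_left ε ρ) _))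
                  (hnonneg _) (pow_nonneg hθ0 _)
          _ = θ ^ N := by rw [← pow_add]; congr 1; omega
        · calc ρ ^ n * nm (tc w n) ≤ ρ ^ n * 1 :=
                mul_le_mul_of_nonneg_left (hle1 _) (pow_nonneg hρ0.le n)
          _ = ρ ^ n := mul_one _
          _ ≤ ρ ^ N := pow_le_pow_of_le_one hρ0.le hρ1.le (by omega)
          _ ≤ θ ^ N := pow_le_pow_left₀ hρ0.le (le_max_right ε ρ) N
      exact lt_of_le_of_lt (ciSup_le hb) hN
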